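/- In the Erdős–Rényi random graph G(k, 1/2), for any real t̄ with t̄ ≤ (k−1)/2, the probability that the maximum degree is at most t̄ satisfies Pr(Δ(G(k,1/2)) ≤ t̄) ≤ exp(−C(k,2)·Λ*(t̄/(k−1))). -/

import Mathlib

open scoped Classical

/-- `Λ*(x) = x ln(2x) + (1-x) ln(2(1-x))` with `Real.log 0 = 0` giving `0·ln 0 = 0`. -/
noncomputable def LambdaStar (x : ℝ) : ℝ :=
  x * Real.log (2 * x) + (1 - x) * Real.log (2 * (1 - x))

/-- Chernoff-type bound on the lower tail of the binomial coefficients. -/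
lemma chernoff_sum (n m : ℕ) (x : ℝ) (hx0 : 0 < x) (hx2 : x ≤ 1/2)
    (hm : (m : ℝ) ≤ (n : ℝ) * x) :
    (∑ j ∈ Finset.range (m+1), (n.choose j : ℝ)) *
      (x ^ ((n:ℝ) * x) * (1-x) ^ ((n:ℝ) - (n:ℝ)*x)) ≤ 1 := by
  have hx1 : x < 1 := lt_of_le_of_lt hx2 (by norm_num)
  have h1x : 0 < 1 - x := by linarith
  have hnx_le : (n:ℝ) * x ≤ (n:ℝ) := by nlinarith [Nat.cast_nonneg (α := ℝ) n]
  have hmn : m ≤ n := by exact_mod_cast le_trans hm hnx_le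
  have hb0 : 0 < x / (1-x) := div_pos hx0 h1x
  have hb1 : x / (1-x) ≤ 1 := (div_le_one h1x).2 (by linarith)
  have hg : ∀ c : ℝ, x ^ c * (1-x) ^ ((n:ℝ) - c)
      = (1-x) ^ (n:ℝ) * (x / (1-x)) ^ c := by
    intro c
    rw [Real.div_rpow hx0.le h1x.le, Real.rpow_sub h1x]
    have h1 : (1-x) ^ c ≠ 0 := ne_of_gt (Real.rpow_pos_of_pos h1x c)
    field_simp
  have key : ∀ j ∈ Finset.range (m+1),
      (n.choose j : ℝ) * (x ^ ((n:ℝ)*x) * (1-x) ^ ((n:ℝ) - (n:ℝ)*x)) ≤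
      x ^ j * (1-x) ^ (n - j) * (n.choose j : ℝ) := by
    intro j hj
    rw [Finset.mem_range] at hj
    have hjm : j ≤ m := Nat.lt_succ_iff.mp hj
    have hjn : j ≤ n := le_trans hjm hmn
    have hjx : (j : ℝ) ≤ (n:ℝ) * x := le_trans (by exact_mod_cast hjm) hm
    have hmono : x ^ ((n:ℝ)*x) * (1-x) ^ ((n:ℝ) - (n:ℝ)*x)
        ≤ x ^ (j:ℝ) * (1-x) ^ ((n:ℝ) - (j:ℝ)) := by
      rw [hg, hg]
      exact mul_le_mul_of_nonneg_left
        (Real.rpow_le_rpow_of_exponent_ge hb0 hb1 hjx)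
        (Real.rpow_nonneg h1x.le _)
    have heq : x ^ (j:ℝ) * (1-x) ^ ((n:ℝ) - (j:ℝ)) = x ^ j * (1-x) ^ (n - j) := by
      rw [show ((n:ℝ) - (j:ℝ)) = ((n - j : ℕ) : ℝ) by
            rw [Nat.cast_sub hjn],
        Real.rpow_natCast, Real.rpow_natCast]
    rw [mul_comm (x ^ j * (1-x) ^ (n-j)) _]
    exact mul_le_mul_of_nonneg_left (heq ▸ hmono) (Nat.cast_nonneg _)
  calc (∑ j ∈ Finset.range (m+1), (n.choose j : ℝ)) *
        (x ^ ((n:ℝ) * x) * (1-x) ^ ((n:ℝ) - (n:ℝ)*x))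
      = ∑ j ∈ Finset.range (m+1),
          (n.choose j : ℝ) * (x ^ ((n:ℝ) * x) * (1-x) ^ ((n:ℝ) - (n:ℝ)*x)) :=
        Finset.sum_mul _ _ _
    _ ≤ ∑ j ∈ Finset.range (m+1), x ^ j * (1-x) ^ (n - j) * (n.choose j : ℝ) :=
        Finset.sum_le_sum key
    _ ≤ ∑ j ∈ Finset.range (n+1), x ^ j * (1-x) ^ (n - j) * (n.choose j : ℝ) := by
        apply Finset.sum_le_sum_of_subset_of_nonneg
          (Finset.range_subset_range.2 (by omega))
        intro j _ _
        positivity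
    _ = (x + (1-x)) ^ n := (add_pow x (1-x) n).symm
    _ = 1 := by norm_num

/-- In `G(k,1/2)` (uniform over all graphs on `k` labelled vertices),
`Pr(Δ ≤ t̄) ≤ exp(−C(k,2)·Λ*(t̄/(k−1)))` whenever `t̄ ≤ (k−1)/2`. -/
theorem max_degree_tail_bound (k : ℕ) (tbar : ℝ) (ht : tbar ≤ ((k : ℝ) - 1) / 2) :
    ((Finset.univ.filter
          (fun G : SimpleGraph (Fin k) => (G.maxDegree : ℝ) ≤ tbar)).card : ℝ) /
        (2 ^ k.choose 2 : ℝ) ≤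
      Real.exp (-(k.choose 2 : ℝ) * LambdaStar (tbar / ((k : ℝ) - 1))) := by
  classical
  set n := k.choose 2 with hn
  rcases lt_or_ge tbar 0 with htneg | htpos
  · -- tbar < 0 : no graph qualifies
    have hempty : (Finset.univ.filter
        (fun G : SimpleGraph (Fin k) => (G.maxDegree : ℝ) ≤ tbar)) = ∅ := by
      apply Finset.filter_false_of_mem
      intro G _
      push_neg
      exact lt_of_lt_of_le htneg (Nat.cast_nonneg _)
    rw [hempty]
    simp only [Finset.card_empty, Nat.cast_zero, zero_div]
    positivity
  rcases Nat.lt_or_ge k 2 with hk | hk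
  · -- k = 0 or 1
    interval_cases k
    · exfalso
      norm_num at ht
      linarith
    · have hcard : (Finset.univ.filter
          (fun G : SimpleGraph (Fin 1) => (G.maxDegree : ℝ) ≤ tbar)).card ≤ 1 := by
        apply Finset.card_le_one.2
        intro G _ H _
        ext a b
        have hab : a = b := Subsingleton.elim a b
        subst hab
        simp
      have hn1 : n = 0 := by simp [hn]
      rw [hn1]
      simp only [pow_zero, Nat.cast_zero, neg_zero, zero_mul, Real.exp_zero, div_one]
      exact_mod_cast hcard
  · -- main case : k ≥ 2
    have hk2 : (2:ℝ) ≤ (k:ℝ) := by exact_mod_cast hk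
    have hk1pos : (0:ℝ) < (k:ℝ) - 1 := by linarith
    set x := tbar / ((k:ℝ) - 1) with hxdef
    have hx0 : 0 ≤ x := div_nonneg htpos hk1pos.le
    have hx2 : x ≤ 1/2 := by
      rw [hxdef, div_le_iff₀ hk1pos]
      linarith
    have h1x : 0 < 1 - x := by linarith
    have hnr : (n:ℝ) = (k:ℝ) * ((k:ℝ) - 1) / 2 := by
      rw [hn]; exact_mod_cast Nat.cast_choose_two (K := ℝ) k
    have hnx : (n:ℝ) * x = (k:ℝ) * tbar / 2 := by
      rw [hnr, hxdef]
      field_simp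
    have h2npos : (0:ℝ) < 2 ^ n := by positivity
    rcases eq_or_lt_of_le hx0 with hx0' | hx0'
    · -- x = 0, i.e. tbar = 0 : only the empty graph
      have htbar0 : tbar = 0 := by
        have := hx0'.symm
        rw [hxdef, div_eq_zero_iff] at this
        rcases this with h | h
        · exact h
        · exact absurd h (ne_of_gt hk1pos)
      have hcard : (Finset.univ.filter
          (fun G : SimpleGraph (Fin k) => (G.maxDegree : ℝ) ≤ tbar)).card ≤ 1 := by
        apply Finset.card_le_one.2
        intro G hG H hH
        rw [Finset.mem_filter] at hG hH
        have hdeg0 : ∀ (J : SimpleGraph (Fin k)), (J.maxDegree : ℝ) ≤ tbar →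
            ∀ a b, ¬J.Adj a b := by
          intro J hJ a b hab
          have h1 : (J.maxDegree : ℝ) ≤ 0 := htbar0 ▸ hJ
          have h2 : J.maxDegree = 0 := by
            have : J.maxDegree ≤ 0 := by exact_mod_cast h1
            omega
          have h3 := J.degree_le_maxDegree a
          have h4 : J.degree a = 0 := by omega
          have h5 : b ∈ J.neighborFinset a := (SimpleGraph.mem_neighborFinset _ _ _).2 hab
          rw [SimpleGraph.degree, Finset.card_eq_zero] at h4
          rw [h4] at h5
          exact absurd h5 (Finset.notMem_empty b)
        ext a b
        exact iff_of_false (hdeg0 G hG.2 a b) (hdeg0 H hH.2 a b)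
      have hL0 : LambdaStar x = Real.log 2 := by
        rw [← hx0']
        simp [LambdaStar]
      rw [hL0]
      have hexp0 : Real.exp (-(n:ℝ) * Real.log 2) = ((2:ℝ)^n)⁻¹ := by
        rw [show (-(n:ℝ) * Real.log 2) = -((n:ℝ) * Real.log 2) by ring,
          Real.exp_neg, Real.exp_nat_mul, Real.exp_log two_pos]
      rw [hexp0, div_le_iff₀ h2npos, inv_mul_cancel₀ (ne_of_gt h2npos)]
      exact_mod_cast hcard
    · -- 0 < x : Chernoff argument
      set m := Nat.floor ((n:ℝ) * x) with hmdef
      have hm : (m:ℝ) ≤ (n:ℝ) * x := Nat.floor_le (by positivity)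
      -- every qualifying graph has at most m edges
      have hedge : ∀ G : SimpleGraph (Fin k), (G.maxDegree : ℝ) ≤ tbar →
          G.edgeFinset.card ≤ m := by
        intro G hG
        have h1 : ∀ v : Fin k, (G.degree v : ℝ) ≤ tbar := by
          intro v
          exact le_trans (by exact_mod_cast G.degree_le_maxDegree v) hG
        have h2 : ((2 * G.edgeFinset.card : ℕ) : ℝ) ≤ (k:ℝ) * tbar := by
          rw [← G.sum_degrees_eq_twice_card_edges]
          push_cast
          calc ∑ v : Fin k, (G.degree v : ℝ) ≤ ∑ _v : Fin k, tbar :=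
                Finset.sum_le_sum (fun v _ => h1 v)
            _ = (k:ℝ) * tbar := by
                simp [Finset.sum_const, Finset.card_univ, mul_comm]
        have h3 : (G.edgeFinset.card : ℝ) ≤ (n:ℝ) * x := by
          rw [hnx]
          push_cast at h2
          linarith
        exact Nat.le_floor h3
      -- counting step
      have hcount : (Finset.univ.filter
          (fun G : SimpleGraph (Fin k) => (G.maxDegree : ℝ) ≤ tbar)).card ≤
          ∑ j ∈ Finset.range (m+1), n.choose j := by
        set U := (⊤ : SimpleGraph (Fin k)).edgeFinset with hUdef
        have hU : U.card = n := by
          rw [hUdef, SimpleGraph.card_edgeFinset_top_eq_card_choose_two,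
            Fintype.card_fin, hn]
        calc (Finset.univ.filter
              (fun G : SimpleGraph (Fin k) => (G.maxDegree : ℝ) ≤ tbar)).card
            ≤ (U.powerset.filter (fun s => s.card ≤ m)).card := by
              apply Finset.card_le_card_of_injOn (fun G => G.edgeFinset)
              · intro G hG
                rw [Finset.mem_coe, Finset.mem_filter] at hG ⊢
                refine ⟨Finset.mem_powerset.2 (SimpleGraph.edgeFinset_mono le_top), ?_⟩
                exact hedge G hG.2
              · intro G _ H _ hGH
                exact SimpleGraph.edgeFinset_inj.1 hGH
          _ ≤ ((Finset.range (m+1)).biUnion (fun j => U.powersetCard j)).card := by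
              apply Finset.card_le_card
              intro s hs
              rw [Finset.mem_filter, Finset.mem_powerset] at hs
              rw [Finset.mem_biUnion]
              exact ⟨s.card, Finset.mem_range.2 (Nat.lt_succ_of_le hs.2),
                Finset.mem_powersetCard.2 ⟨hs.1, rfl⟩⟩
          _ ≤ ∑ j ∈ Finset.range (m+1), (U.powersetCard j).card :=
              Finset.card_biUnion_le
          _ = ∑ j ∈ Finset.range (m+1), n.choose j := by
              refine Finset.sum_congr rfl fun j _ => ?_
              rw [Finset.card_powersetCard, hU]
      have hS : ((Finset.univ.filter
          (fun G : SimpleGraph (Fin k) => (G.maxDegree : ℝ) ≤ tbar)).card : ℝ) ≤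
          ∑ j ∈ Finset.range (m+1), (n.choose j : ℝ) := by
        exact_mod_cast hcount
      -- Chernoff bound
      have key := chernoff_sum n m x hx0' hx2 hm
      set A := x ^ ((n:ℝ) * x) * (1-x) ^ ((n:ℝ) - (n:ℝ)*x) with hAdef
      have hApos : 0 < A :=
        mul_pos (Real.rpow_pos_of_pos hx0' _) (Real.rpow_pos_of_pos h1x _)
      have hSA : (∑ j ∈ Finset.range (m+1), (n.choose j : ℝ)) ≤ 1 / A :=
        (le_div_iff₀ hApos).2 key
      -- identify the RHS
      have hA' : A = Real.exp (Real.log x * ((n:ℝ)*x) +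
          Real.log (1-x) * ((n:ℝ) - (n:ℝ)*x)) := by
        rw [hAdef, Real.rpow_def_of_pos hx0', Real.rpow_def_of_pos h1x, ← Real.exp_add]
      have h2n : (2:ℝ)^n = Real.exp ((n:ℝ) * Real.log 2) := by
        rw [Real.exp_nat_mul, Real.exp_log two_pos]
      have hlog1 : Real.log (2 * x) = Real.log 2 + Real.log x :=
        Real.log_mul two_ne_zero (ne_of_gt hx0')
      have hlog2 : Real.log (2 * (1 - x)) = Real.log 2 + Real.log (1-x) :=
        Real.log_mul two_ne_zero (ne_of_gt h1x)
      have hexp : Real.exp (-(n:ℝ) * LambdaStar x) = 1 / (A * 2^n) := by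
        rw [hA', h2n, ← Real.exp_add, one_div, ← Real.exp_neg]
        congr 1
        simp only [LambdaStar, hlog1, hlog2]
        ring
      rw [hexp]
      calc ((Finset.univ.filter
            (fun G : SimpleGraph (Fin k) => (G.maxDegree : ℝ) ≤ tbar)).card : ℝ) /
            (2 ^ n : ℝ)
          ≤ (1 / A) / (2 ^ n : ℝ) :=
            by
              gcongr
              exact le_trans hS hSA
        _ = 1 / (A * 2^n) := by
            rw [div_div]
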